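/- With strongly admissible data (σ(A) ⊂ ℂ₊, i ∉ σ(A)) and the limits κ_R = lim R_k⁻¹, κ_Q = lim Q_k⁻¹ existing, the transfer matrix functions converge: lim_{k→∞} w_A(k, -1/z) = diag(χ₁(z), χ₂(z)), where χ₁(z) = I_{m₁} - i z ϑ₁* κ_R (I + zA)⁻¹ ϑ₁ and χ₂(z) = I_{m₂} + i z ϑ₂* κ_Q (I + zA)⁻¹ ϑ₂. -/

import Mathlib

open Matrix Complex Filter Topology
open scoped ComplexOrder ENNReal NNReal

attribute [local instance] Matrix.linftyOpNormedRing Matrix.linftyOpNormedAlgebra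

section Helpers

private lemma entry_le (n : ℕ) (M : Matrix (Fin n) (Fin n) ℂ) (i j : Fin n) : ‖M i j‖ ≤ ‖M‖ := by
  have hplus : ‖M i j‖₊ ≤ ‖M‖₊ := by
    rw [Matrix.linfty_opNNNorm_def]
    calc ‖M i j‖₊ ≤ ∑ j', ‖M i j'‖₊ :=
        Finset.single_le_sum (f := fun j' => ‖M i j'‖₊) (fun _ _ => zero_le) (Finset.mem_univ j)
      _ ≤ _ := Finset.le_sup (f := fun i => ∑ j', ‖M i j'‖₊) (Finset.mem_univ i)
  exact_mod_cast hplus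

private lemma pow_tendsto_zero (n : ℕ) (hn : 0 < n) (G : Matrix (Fin n) (Fin n) ℂ)
    (h : ∀ lam ∈ spectrum ℂ G, ‖lam‖₊ < 1) :
    Filter.Tendsto (fun k : ℕ => G ^ k) Filter.atTop (nhds 0) := by
  have : Nonempty (Fin n) := Fin.pos_iff_nonempty.1 hn
  letI : CompleteSpace (Matrix (Fin n) (Fin n) ℂ) := FiniteDimensional.complete ℂ _
  have hρ : spectralRadius ℂ G < 1 := by
    simpa using spectrum.spectralRadius_lt_of_forall_lt G h
  obtain ⟨c, hc1, hc2⟩ := exists_between hρ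
  have hcne : c ≠ ⊤ := (hc2.trans_le le_top).ne
  have hev : ∀ᶠ k : ℕ in atTop, (‖G ^ k‖₊ : ℝ≥0∞) ^ (1 / (k : ℝ)) < c :=
    (spectrum.pow_nnnorm_pow_one_div_tendsto_nhds_spectralRadius G).eventually_lt_const hc1
  have hbound : ∀ᶠ k : ℕ in atTop, ‖G ^ k‖ ≤ c.toReal ^ k := by
    filter_upwards [hev, eventually_ge_atTop 1] with k hk hk1
    have hk0 : (k : ℝ) ≠ 0 := by positivity
    have h1 : ((‖G ^ k‖₊ : ℝ≥0∞) ^ (1 / (k : ℝ))) ^ (k : ℝ) ≤ c ^ (k : ℝ) :=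
      ENNReal.rpow_le_rpow hk.le (by positivity)
    rw [← ENNReal.rpow_mul, one_div_mul_cancel hk0, ENNReal.rpow_one] at h1
    have h2 : (‖G ^ k‖₊ : ℝ≥0∞) ≤ c ^ k := by
      rwa [← ENNReal.rpow_natCast c k]
    have h3 : ‖G ^ k‖₊ ≤ c.toNNReal ^ k := by
      have := ENNReal.toNNReal_mono (by simp [ENNReal.pow_ne_top hcne]) h2
      simpa [ENNReal.toNNReal_pow] using this
    calc ‖G ^ k‖ = ((‖G ^ k‖₊ : ℝ≥0) : ℝ) := rfl
      _ ≤ ((c.toNNReal ^ k : ℝ≥0) : ℝ) := by exact_mod_cast h3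
      _ = c.toReal ^ k := by simp [ENNReal.toReal]
  have hclt : c.toReal < 1 := by
    have := ENNReal.toReal_lt_toReal hcne (by simp : (1:ℝ≥0∞) ≠ ⊤)
    simpa using this.2 hc2
  have hpow : Tendsto (fun k : ℕ => c.toReal ^ k) atTop (nhds 0) :=
    tendsto_pow_atTop_nhds_zero_of_norm_lt_one (by
      rw [Real.norm_eq_abs, _root_.abs_of_nonneg ENNReal.toReal_nonneg]; exact hclt)
  have hnorm : Tendsto (fun k : ℕ => ‖G ^ k‖) atTop (nhds 0) := by
    apply squeeze_zero' (Eventually.of_forall fun k => norm_nonneg _) hbound hpow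
  refine tendsto_pi_nhds.2 ?_
  intro i
  rw [tendsto_pi_nhds]
  intro j
  simp only [Matrix.zero_apply]
  rw [tendsto_zero_iff_norm_tendsto_zero]
  exact squeeze_zero (fun k => norm_nonneg _) (fun k => entry_le n _ i j) hnorm

private lemma comm_inv {n : ℕ} {X Y : Matrix (Fin n) (Fin n) ℂ} (h : Commute X Y)
    (hY : IsUnit Y.det) : Commute X Y⁻¹ := by
  have h2 : Y⁻¹ * Y = 1 := Y.nonsing_inv_mul hY
  have h3 : Y * Y⁻¹ = 1 := Y.mul_nonsing_inv hY
  unfold Commute SemiconjBy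
  calc X * Y⁻¹ = 1 * (X * Y⁻¹) := by rw [Matrix.one_mul]
    _ = (Y⁻¹ * Y) * (X * Y⁻¹) := by rw [h2]
    _ = Y⁻¹ * ((Y * X) * Y⁻¹) := by simp only [Matrix.mul_assoc]
    _ = Y⁻¹ * ((X * Y) * Y⁻¹) := by rw [← h.eq]
    _ = Y⁻¹ * (X * (Y * Y⁻¹)) := by simp only [Matrix.mul_assoc]
    _ = Y⁻¹ * X := by rw [h3, Matrix.mul_one]

private lemma smul_unit {n : ℕ} {X : Matrix (Fin n) (Fin n) ℂ} (c : ℂ) (hc : c ≠ 0)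
    (hX : IsUnit X.det) : IsUnit (c • X).det := by
  rw [Matrix.det_smul, Fintype.card_fin]
  exact (IsUnit.mk0 _ (pow_ne_zero n hc)).mul hX

private lemma cayley_spec {n : ℕ} (A : Matrix (Fin n) (Fin n) ℂ)
    (hspec : ∀ μ ∈ spectrum ℂ A, 0 < μ.im) :
    ∀ lam ∈ spectrum ℂ ((A + Complex.I • 1)⁻¹ * (A - Complex.I • 1)), ‖lam‖₊ < 1 := by
  intro lam hlam
  have hni : (-Complex.I) ∉ spectrum ℂ A := fun hmem => by
    have := hspec _ hmem; simp at this; linarith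
  have hAiu : IsUnit (A + Complex.I • 1) := by
    have := spectrum.notMem_iff.1 hni
    rw [Algebra.algebraMap_eq_smul_one] at this
    have heq : (-Complex.I) • (1 : Matrix (Fin n) (Fin n) ℂ) - A = -(A + Complex.I • 1) := by
      rw [neg_smul]; abel
    rw [heq, IsUnit.neg_iff] at this
    exact this
  have hAidet : IsUnit (A + Complex.I • 1).det := (Matrix.isUnit_iff_isUnit_det _).1 hAiu
  have hmul : (A + Complex.I • 1)⁻¹ * (A + Complex.I • 1) = 1 :=
    Matrix.nonsing_inv_mul _ hAidet
  rw [spectrum.mem_iff, Algebra.algebraMap_eq_smul_one] at hlam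
  have key : lam • (1 : Matrix (Fin n) (Fin n) ℂ) - (A + Complex.I • 1)⁻¹ * (A - Complex.I • 1)
      = (A + Complex.I • 1)⁻¹ * ((lam - 1) • A + ((lam + 1) * Complex.I) • 1) := by
    have h1 : ((lam - 1) • A + ((lam + 1) * Complex.I) • (1 : Matrix (Fin n) (Fin n) ℂ))
        = lam • (A + Complex.I • 1) - (A - Complex.I • 1) := by
      rw [smul_add, smul_smul, sub_smul, one_smul]
      module
    conv_rhs => rw [h1, Matrix.mul_sub, Matrix.mul_smul, hmul]
  by_cases hlam1 : lam = 1
  · exfalso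
    apply hlam
    rw [key, hlam1]
    have h2 : ((1:ℂ) - 1) • A + (((1:ℂ) + 1) * Complex.I) • (1 : Matrix (Fin n) (Fin n) ℂ)
        = (2 * Complex.I) • 1 := by rw [sub_self, zero_smul, zero_add]; norm_num
    rw [h2]
    refine (Matrix.isUnit_iff_isUnit_det _).2 ?_
    rw [Matrix.det_mul]
    exact ((A + Complex.I • 1).isUnit_nonsing_inv_det hAidet).mul
      (smul_unit _ (by simp [Complex.I_ne_zero] : (2:ℂ) * Complex.I ≠ 0) (by simp))
  · set μ : ℂ := (1 + lam) * Complex.I / (1 - lam) with hμ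
    have h1lam : (1:ℂ) - lam ≠ 0 := sub_ne_zero.2 (Ne.symm hlam1)
    have hscal : (lam - 1) * μ = -((lam + 1) * Complex.I) := by
      rw [hμ]; field_simp; ring
    have key2 : lam • (1 : Matrix (Fin n) (Fin n) ℂ)
        - (A + Complex.I • 1)⁻¹ * (A - Complex.I • 1)
        = (lam - 1) • ((A + Complex.I • 1)⁻¹ * (A - μ • 1)) := by
      rw [key]
      have hin : (lam - 1) • (A - μ • (1 : Matrix (Fin n) (Fin n) ℂ))
          = (lam - 1) • A + ((lam + 1) * Complex.I) • 1 := by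
        rw [smul_sub, smul_smul, hscal, neg_smul, sub_neg_eq_add]
      rw [← hin, Matrix.mul_smul]
    have hAμ : ¬ IsUnit (A - μ • (1 : Matrix (Fin n) (Fin n) ℂ)) := by
      intro hu
      apply hlam
      rw [key2]
      refine (Matrix.isUnit_iff_isUnit_det _).2 ?_
      refine smul_unit _ (sub_ne_zero.2 hlam1) ?_
      rw [Matrix.det_mul]
      exact ((A + Complex.I • 1).isUnit_nonsing_inv_det hAidet).mul
        ((Matrix.isUnit_iff_isUnit_det _).1 hu)
    have hμmem : μ ∈ spectrum ℂ A := by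
      rw [spectrum.mem_iff, Algebra.algebraMap_eq_smul_one]
      intro hu
      apply hAμ
      have : A - μ • (1 : Matrix (Fin n) (Fin n) ℂ) = -(μ • 1 - A) := by abel
      rw [this, IsUnit.neg_iff]
      exact hu
    have him := hspec μ hμmem
    have hns : 0 < Complex.normSq (1 - lam) := Complex.normSq_pos.2 h1lam
    rw [hμ, Complex.div_im] at him
    simp only [Complex.mul_im, Complex.mul_re, Complex.add_re, Complex.add_im, Complex.one_re,
      Complex.one_im, Complex.I_re, Complex.I_im, Complex.sub_re, Complex.sub_im,
      Complex.normSq_apply] at him hns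
    have habs : ‖lam‖ < 1 := by
      have h2 : Complex.normSq lam < 1 := by
        rw [div_sub_div_same, lt_div_iff₀ hns, zero_mul] at him
        simp only [Complex.normSq_apply]
        nlinarith [him, hns]
      rw [Complex.normSq_eq_norm_sq] at h2
      nlinarith [norm_nonneg lam]
    exact_mod_cast habs

private lemma core {n : ℕ} (Bk Ck Sinv M Rinv Qinv Gk : Matrix (Fin n) (Fin n) ℂ)
    (hBkdet : IsUnit Bk.det)
    (hRinv : Rinv = Bkᴴ * Sinv * Bk) (hQinv : Qinv = Ckᴴ * Sinv * Ck)
    (hGkdef : Gk = Bk⁻¹ * Ck) (hMB : M * Bk = Bk * M) (hMC : M * Ck = Ck * M) :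
    (Bkᴴ * Sinv * M * Bk = Rinv * M) ∧ (Bkᴴ * Sinv * M * Ck = Rinv * M * Gk)
      ∧ (Ckᴴ * Sinv * M * Bk = Gkᴴ * (Rinv * M)) ∧ (Ckᴴ * Sinv * M * Ck = Qinv * M) := by
  have hsplit : Ck = Bk * Gk := by
    rw [hGkdef, ← Matrix.mul_assoc, Bk.mul_nonsing_inv hBkdet, Matrix.one_mul]
  have hH : Bk⁻¹ᴴ * Bkᴴ = 1 := by
    rw [← Matrix.conjTranspose_mul, Bk.mul_nonsing_inv hBkdet, Matrix.conjTranspose_one]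
  refine ⟨?_, ?_, ?_, ?_⟩
  · rw [hRinv]
    simp only [Matrix.mul_assoc]
    rw [hMB]
  · conv_lhs => rw [hsplit]
    rw [hRinv]
    simp only [Matrix.mul_assoc]
    rw [← Matrix.mul_assoc M Bk Gk, hMB]
    simp only [Matrix.mul_assoc]
  · rw [hGkdef, hRinv, Matrix.conjTranspose_mul]
    simp only [Matrix.mul_assoc]
    rw [← Matrix.mul_assoc Bk⁻¹ᴴ Bkᴴ _, hH, Matrix.one_mul, hMB]
  · rw [hQinv]
    simp only [Matrix.mul_assoc]
    rw [hMC]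

private lemma tendsto_fromBlocks {m₁ m₂ : ℕ}
    {fa : ℕ → Matrix (Fin m₁) (Fin m₁) ℂ} {fb : ℕ → Matrix (Fin m₁) (Fin m₂) ℂ}
    {fc : ℕ → Matrix (Fin m₂) (Fin m₁) ℂ} {fd : ℕ → Matrix (Fin m₂) (Fin m₂) ℂ}
    {La : Matrix (Fin m₁) (Fin m₁) ℂ} {Lb : Matrix (Fin m₁) (Fin m₂) ℂ}
    {Lc : Matrix (Fin m₂) (Fin m₁) ℂ} {Ld : Matrix (Fin m₂) (Fin m₂) ℂ}
    (ha : Tendsto fa atTop (nhds La)) (hb : Tendsto fb atTop (nhds Lb))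
    (hc : Tendsto fc atTop (nhds Lc)) (hd : Tendsto fd atTop (nhds Ld)) :
    Tendsto (fun k => Matrix.fromBlocks (fa k) (fb k) (fc k) (fd k)) atTop
      (nhds (Matrix.fromBlocks La Lb Lc Ld)) := by
  refine tendsto_pi_nhds.2 ?_
  intro i
  rw [tendsto_pi_nhds]
  intro j
  rcases i with i | i <;> rcases j with j | j <;>
    simp only [Matrix.fromBlocks_apply₁₁, Matrix.fromBlocks_apply₁₂,
      Matrix.fromBlocks_apply₂₁, Matrix.fromBlocks_apply₂₂]
  · exact (tendsto_pi_nhds.1 (tendsto_pi_nhds.1 ha i) j)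
  · exact (tendsto_pi_nhds.1 (tendsto_pi_nhds.1 hb i) j)
  · exact (tendsto_pi_nhds.1 (tendsto_pi_nhds.1 hc i) j)
  · exact (tendsto_pi_nhds.1 (tendsto_pi_nhds.1 hd i) j)

private lemma fromBlocks_sub' {m₁ m₂ : ℕ}
    (A A' : Matrix (Fin m₁) (Fin m₁) ℂ) (B B' : Matrix (Fin m₁) (Fin m₂) ℂ)
    (C C' : Matrix (Fin m₂) (Fin m₁) ℂ) (D D' : Matrix (Fin m₂) (Fin m₂) ℂ) :
    Matrix.fromBlocks A B C D - Matrix.fromBlocks A' B' C' D'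
      = Matrix.fromBlocks (A - A') (B - B') (C - C') (D - D') := by
  ext i j
  rcases i with i | i <;> rcases j with j | j <;> simp

end Helpers

/-- Convergence (R5)-(R6) of the transfer matrices w_A(k, -1/z) to
diag(χ₁(z), χ₂(z)). -/
theorem stmt12 (n m₁ m₂ : ℕ) (hn : 0 < n)
    (A : Matrix (Fin n) (Fin n) ℂ) (hA : IsUnit A.det)
    (hspec : ∀ μ ∈ spectrum ℂ A, 0 < μ.im)
    (hi : Complex.I ∉ spectrum ℂ A)
    (θ₁ : Matrix (Fin n) (Fin m₁) ℂ) (θ₂ : Matrix (Fin n) (Fin m₂) ℂ)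
    (J : Matrix (Fin m₁ ⊕ Fin m₂) (Fin m₁ ⊕ Fin m₂) ℂ)
    (hJ : J = Matrix.fromBlocks 1 0 0 (-1))
    (P : ℕ → Matrix (Fin n) (Fin m₁ ⊕ Fin m₂) ℂ)
    (hPdef : ∀ r, P r = Matrix.fromCols ((1 + Complex.I • A⁻¹) ^ r * θ₁)
      ((1 - Complex.I • A⁻¹) ^ r * θ₂))
    (S : ℕ → Matrix (Fin n) (Fin n) ℂ) (hSpos : ∀ r, (S r).PosDef)
    (R Q : ℕ → Matrix (Fin n) (Fin n) ℂ)
    (hR : ∀ r, R r = ((1 + Complex.I • A⁻¹) ^ r)⁻¹ * S r *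
      (((1 - Complex.I • Aᴴ⁻¹) ^ r)⁻¹))
    (hQ : ∀ r, Q r = ((1 - Complex.I • A⁻¹) ^ r)⁻¹ * S r *
      (((1 + Complex.I • Aᴴ⁻¹) ^ r)⁻¹))
    (κR κQ : Matrix (Fin n) (Fin n) ℂ)
    (hκR : Filter.Tendsto (fun k => (R k)⁻¹) Filter.atTop (nhds κR))
    (hκQ : Filter.Tendsto (fun k => (Q k)⁻¹) Filter.atTop (nhds κQ))
    (hκRpos : κR.PosSemidef) (hκQpos : κQ.PosSemidef)
    (z : ℂ) (hz : z ≠ 0) (hzA : IsUnit (1 + z • A).det) :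
    Filter.Tendsto
      (fun k : ℕ =>
        1 - Complex.I • (J * (P k)ᴴ * (S k)⁻¹ * (A - (-1 / z) • 1)⁻¹ * P k))
      Filter.atTop
      (nhds (Matrix.fromBlocks
        (1 - (Complex.I * z) • (θ₁ᴴ * κR * (1 + z • A)⁻¹ * θ₁)) 0 0
        (1 + (Complex.I * z) • (θ₂ᴴ * κQ * (1 + z • A)⁻¹ * θ₂)))) := by
  -- abbreviations
  set B : Matrix (Fin n) (Fin n) ℂ := 1 + Complex.I • A⁻¹ with hBdef
  set C : Matrix (Fin n) (Fin n) ℂ := 1 - Complex.I • A⁻¹ with hCdef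
  set N : Matrix (Fin n) (Fin n) ℂ := A - (-1 / z) • 1 with hNdef
  set M : Matrix (Fin n) (Fin n) ℂ := N⁻¹ with hMdef
  set G : Matrix (Fin n) (Fin n) ℂ := B⁻¹ * C with hGdef
  -- invertibility facts
  have hni : (-Complex.I) ∉ spectrum ℂ A := fun hmem => by
    have := hspec _ hmem; simp at this; linarith
  have hAidet : IsUnit (A + Complex.I • 1).det := by
    have := spectrum.notMem_iff.1 hni
    rw [Algebra.algebraMap_eq_smul_one] at this
    have heq : (-Complex.I) • (1 : Matrix (Fin n) (Fin n) ℂ) - A = -(A + Complex.I • 1) := by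
      rw [neg_smul]; abel
    rw [heq, IsUnit.neg_iff] at this
    exact (Matrix.isUnit_iff_isUnit_det _).1 this
  have hAmdet : IsUnit (A - Complex.I • 1).det := by
    have := spectrum.notMem_iff.1 hi
    rw [Algebra.algebraMap_eq_smul_one] at this
    have heq : Complex.I • (1 : Matrix (Fin n) (Fin n) ℂ) - A = -(A - Complex.I • 1) := by abel
    rw [heq, IsUnit.neg_iff] at this
    exact (Matrix.isUnit_iff_isUnit_det _).1 this
  have hBfact : B = A⁻¹ * (A + Complex.I • 1) := by
    rw [hBdef, Matrix.mul_add, Matrix.nonsing_inv_mul _ hA, Matrix.mul_smul, Matrix.mul_one]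
  have hCfact : C = A⁻¹ * (A - Complex.I • 1) := by
    rw [hCdef, Matrix.mul_sub, Matrix.nonsing_inv_mul _ hA, Matrix.mul_smul, Matrix.mul_one]
  have hBdet : IsUnit B.det := by
    rw [hBfact, Matrix.det_mul]
    exact (A.isUnit_nonsing_inv_det hA).mul hAidet
  have hCdet : IsUnit C.det := by
    rw [hCfact, Matrix.det_mul]
    exact (A.isUnit_nonsing_inv_det hA).mul hAmdet
  have hNfact : N = z⁻¹ • (1 + z • A) := by
    rw [hNdef]
    match_scalars <;> field_simp
  have hNdet : IsUnit N.det := by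
    rw [hNfact]
    exact smul_unit _ (inv_ne_zero hz) hzA
  have hM : M = z • (1 + z • A)⁻¹ := by
    rw [hMdef]
    refine Matrix.inv_eq_left_inv ?_
    rw [hNfact, Matrix.smul_mul, Matrix.mul_smul, smul_smul, mul_inv_cancel₀ hz, one_smul,
      Matrix.nonsing_inv_mul _ hzA]
  -- commutation facts
  have cAinvA : Commute A⁻¹ A := by
    unfold Commute SemiconjBy
    rw [Matrix.nonsing_inv_mul _ hA, Matrix.mul_nonsing_inv _ hA]
  have cBC : Commute B C :=
    Commute.add_left (Commute.one_left _)
      ((Commute.one_right _).sub_right (Commute.refl _))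
  have cAinvN : Commute A⁻¹ N :=
    cAinvA.sub_right ((Commute.one_right A⁻¹).smul_right _)
  have cBN : Commute B N :=
    Commute.add_left (Commute.one_left _) (cAinvN.smul_left _)
  have cCN : Commute C N :=
    Commute.sub_left (Commute.one_left _) (cAinvN.smul_left _)
  have cMB : Commute M B := (comm_inv cBN hNdet).symm
  have cMC : Commute M C := (comm_inv cCN hNdet).symm
  have cBinvC : Commute B⁻¹ C := (comm_inv cBC.symm hBdet).symm
  -- spectrum of G
  have hGeq : G = (A + Complex.I • 1)⁻¹ * (A - Complex.I • 1) := by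
    rw [hGdef, hBfact, hCfact, Matrix.mul_inv_rev, Matrix.nonsing_inv_nonsing_inv _ hA]
    calc (A + Complex.I • 1)⁻¹ * A * (A⁻¹ * (A - Complex.I • 1))
        = (A + Complex.I • 1)⁻¹ * ((A * A⁻¹) * (A - Complex.I • 1)) := by
          simp only [Matrix.mul_assoc]
      _ = (A + Complex.I • 1)⁻¹ * (A - Complex.I • 1) := by
          rw [Matrix.mul_nonsing_inv _ hA, Matrix.one_mul]
  have hGk : Tendsto (fun k : ℕ => G ^ k) atTop (nhds 0) := by
    apply pow_tendsto_zero n hn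
    rw [hGeq]
    exact cayley_spec A hspec
  have hGkH : Tendsto (fun k : ℕ => (G ^ k)ᴴ) atTop (nhds 0) := by
    have hcont : Continuous fun X : Matrix (Fin n) (Fin n) ℂ => Xᴴ :=
      continuous_id.matrix_conjTranspose
    have := (hcont.tendsto 0).comp hGk
    simpa only [Function.comp_def, Matrix.conjTranspose_zero] using this
  have hBH : (1 - Complex.I • Aᴴ⁻¹) = Bᴴ := by
    rw [hBdef]
    simp [Matrix.conjTranspose_add, Matrix.conjTranspose_smul, Matrix.conjTranspose_one,
      Matrix.conjTranspose_nonsing_inv, Complex.star_def, Complex.conj_I, neg_smul,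
      sub_eq_add_neg]
  have hCH : (1 + Complex.I • Aᴴ⁻¹) = Cᴴ := by
    rw [hCdef]
    simp [Matrix.conjTranspose_sub, Matrix.conjTranspose_smul, Matrix.conjTranspose_one,
      Matrix.conjTranspose_nonsing_inv, Complex.star_def, Complex.conj_I, neg_smul,
      sub_eq_add_neg]
  have key : ∀ k : ℕ, (1 : Matrix (Fin m₁ ⊕ Fin m₂) (Fin m₁ ⊕ Fin m₂) ℂ)
        - Complex.I • (J * (P k)ᴴ * (S k)⁻¹ * M * P k) =
      Matrix.fromBlocks
        (1 - Complex.I • (θ₁ᴴ * ((R k)⁻¹ * (M * θ₁))))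
        (-(Complex.I • (θ₁ᴴ * ((R k)⁻¹ * (M * (G ^ k * θ₂))))))
        (Complex.I • (θ₂ᴴ * ((G ^ k)ᴴ * ((R k)⁻¹ * (M * θ₁)))))
        (1 + Complex.I • (θ₂ᴴ * ((Q k)⁻¹ * (M * θ₂)))) := by
    intro k
    have hBkdet : IsUnit ((B ^ k)).det := by rw [Matrix.det_pow]; exact hBdet.pow k
    have hCkdet : IsUnit ((C ^ k)).det := by rw [Matrix.det_pow]; exact hCdet.pow k
    have hBkHdet : IsUnit ((B ^ k)ᴴ).det := by
      rw [Matrix.det_conjTranspose]; exact hBkdet.star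
    have hCkHdet : IsUnit ((C ^ k)ᴴ).det := by
      rw [Matrix.det_conjTranspose]; exact hCkdet.star
    have hSdet : IsUnit (S k).det := (Matrix.isUnit_iff_isUnit_det _).1 (hSpos k).isUnit
    have hRinvk : (R k)⁻¹ = (B ^ k)ᴴ * (S k)⁻¹ * (B ^ k) := by
      rw [hR k, hBH, ← Matrix.conjTranspose_pow, Matrix.mul_inv_rev, Matrix.mul_inv_rev,
        Matrix.nonsing_inv_nonsing_inv _ hBkHdet, Matrix.nonsing_inv_nonsing_inv _ hBkdet]
      simp only [Matrix.mul_assoc]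
    have hQinvk : (Q k)⁻¹ = (C ^ k)ᴴ * (S k)⁻¹ * (C ^ k) := by
      rw [hQ k, hCH, ← Matrix.conjTranspose_pow, Matrix.mul_inv_rev, Matrix.mul_inv_rev,
        Matrix.nonsing_inv_nonsing_inv _ hCkHdet, Matrix.nonsing_inv_nonsing_inv _ hCkdet]
      simp only [Matrix.mul_assoc]
    have hGkfact : G ^ k = (B ^ k)⁻¹ * C ^ k := by
      rw [hGdef, cBinvC.mul_pow, Matrix.inv_pow']
    obtain ⟨hc1, hc2, hc3, hc4⟩ := core (B ^ k) (C ^ k) (S k)⁻¹ M ((R k)⁻¹) ((Q k)⁻¹) (G ^ k)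
      hBkdet hRinvk hQinvk hGkfact ((cMB.pow_right k).eq) ((cMC.pow_right k).eq)
    have e1 : ((B ^ k)ᴴ * (S k)⁻¹ * M * (B ^ k)) * θ₁ = ((R k)⁻¹ * M) * θ₁ := by rw [hc1]
    have e2 : ((B ^ k)ᴴ * (S k)⁻¹ * M * (C ^ k)) * θ₂ = ((R k)⁻¹ * M * G ^ k) * θ₂ := by
      rw [hc2]
    have e3 : ((C ^ k)ᴴ * (S k)⁻¹ * M * (B ^ k)) * θ₁ = ((G ^ k)ᴴ * ((R k)⁻¹ * M)) * θ₁ := by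
      rw [hc3]
    have e4 : ((C ^ k)ᴴ * (S k)⁻¹ * M * (C ^ k)) * θ₂ = ((Q k)⁻¹ * M) * θ₂ := by rw [hc4]
    simp only [Matrix.mul_assoc] at e1 e2 e3 e4
    rw [hPdef k, hJ, Matrix.conjTranspose_fromCols_eq_fromRows_conjTranspose,
      Matrix.fromBlocks_mul_fromRows, Matrix.fromRows_mul, Matrix.fromRows_mul,
      Matrix.fromRows_mul_fromCols, ← Matrix.fromBlocks_one, Matrix.fromBlocks_smul,
      fromBlocks_sub']
    rw [Matrix.fromBlocks_inj]
    simp only [Matrix.one_mul, Matrix.zero_mul, Matrix.neg_mul, add_zero, zero_add,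
      Matrix.conjTranspose_mul, Matrix.mul_assoc, smul_neg, sub_neg_eq_add, zero_sub]
    refine ⟨by rw [e1], by rw [e2], by rw [e3], by rw [e4]⟩
  have ha : Tendsto (fun k => (1 : Matrix (Fin m₁) (Fin m₁) ℂ)
        - Complex.I • (θ₁ᴴ * ((R k)⁻¹ * (M * θ₁)))) atTop
      (nhds (1 - Complex.I • (θ₁ᴴ * (κR * (M * θ₁))))) := by
    have hcont : Continuous fun F : Matrix (Fin n) (Fin n) ℂ =>
        (1 : Matrix (Fin m₁) (Fin m₁) ℂ) - Complex.I • (θ₁ᴴ * (F * (M * θ₁))) :=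
      by fun_prop
    exact (hcont.tendsto κR).comp hκR
  have hb : Tendsto (fun k => -(Complex.I • (θ₁ᴴ * ((R k)⁻¹ * (M * (G ^ k * θ₂))))))
      atTop (nhds 0) := by
    have hcont : Continuous fun p : Matrix (Fin n) (Fin n) ℂ × Matrix (Fin n) (Fin n) ℂ =>
        -(Complex.I • (θ₁ᴴ * (p.1 * (M * (p.2 * θ₂))))) :=
      by fun_prop
    have := (hcont.tendsto (κR, 0)).comp (hκR.prodMk_nhds hGk)
    simpa [Function.comp_def] using this
  have hcγ : Tendsto (fun k => Complex.I • (θ₂ᴴ * ((G ^ k)ᴴ * ((R k)⁻¹ * (M * θ₁)))))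
      atTop (nhds 0) := by
    have hcont : Continuous fun p : Matrix (Fin n) (Fin n) ℂ × Matrix (Fin n) (Fin n) ℂ =>
        Complex.I • (θ₂ᴴ * (p.1 * (p.2 * (M * θ₁)))) :=
      by fun_prop
    have := (hcont.tendsto (0, κR)).comp (hGkH.prodMk_nhds hκR)
    simpa [Function.comp_def] using this
  have hd : Tendsto (fun k => (1 : Matrix (Fin m₂) (Fin m₂) ℂ)
        + Complex.I • (θ₂ᴴ * ((Q k)⁻¹ * (M * θ₂)))) atTop
      (nhds (1 + Complex.I • (θ₂ᴴ * (κQ * (M * θ₂))))) := by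
    have hcont : Continuous fun F : Matrix (Fin n) (Fin n) ℂ =>
        (1 : Matrix (Fin m₂) (Fin m₂) ℂ) + Complex.I • (θ₂ᴴ * (F * (M * θ₂))) :=
      by fun_prop
    exact (hcont.tendsto κQ).comp hκQ
  have hfinal := tendsto_fromBlocks ha hb hcγ hd
  have hLa : (1 : Matrix (Fin m₁) (Fin m₁) ℂ) - Complex.I • (θ₁ᴴ * (κR * (M * θ₁)))
      = 1 - (Complex.I * z) • (θ₁ᴴ * κR * (1 + z • A)⁻¹ * θ₁) := by
    rw [hM]
    simp only [Matrix.mul_smul, Matrix.smul_mul, smul_smul, Matrix.mul_assoc]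
  have hLd : (1 : Matrix (Fin m₂) (Fin m₂) ℂ) + Complex.I • (θ₂ᴴ * (κQ * (M * θ₂)))
      = 1 + (Complex.I * z) • (θ₂ᴴ * κQ * (1 + z • A)⁻¹ * θ₂) := by
    rw [hM]
    simp only [Matrix.mul_smul, Matrix.smul_mul, smul_smul, Matrix.mul_assoc]
  rw [hLa, hLd] at hfinal
  exact Tendsto.congr (fun k => (key k).symm) hfinal
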